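/- Let S be a nonempty semigroup, let T be an S-valued sequence with Π(T) ∩ E(S) = ∅, and let x be a term of T. Then Π(T') is a strict subset of Π(T), where T' is obtained from T by deleting one occurrence of x; equivalently, λ_{T'}(x) = |Π(T'·x) \ Π(T')| ≥ 1. -/
import Mathlib


/-- Product, in order, of the nonempty list `a :: l` in a semigroup. -/
def sprod {S : Type*} [Mul S] (a : S) (l : List S) : S := l.foldl (· * ·) a

/-- `pow1 x n = x^(n+1)`: the `(n+1)`-st power of `x` in a semigroup. -/
def pow1 {S : Type*} [Mul S] (x : S) : ℕ → S := fun n => Nat.rec x (fun _ y => y * x) n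

/-- `Π(T)`: the set of products, in order, of nonempty lists which are
permutations of order-preserving sublists of `T`. -/
def PiSet {S : Type*} [Mul S] (T : List S) : Set S :=
  {s | ∃ u : List S, u.Sublist T ∧ ∃ a l, (a :: l).Perm u ∧ sprod a l = s}

/-- `A(L)`: the set of products, in order, of nonempty order-preserving sublists of `L`. -/
def ASet {S : Type*} [Mul S] (L : List S) : Set S :=
  {s | ∃ a l, (a :: l).Sublist L ∧ sprod a l = s}

/-- `HasIndexPeriod x r p` says that `r` is the index of `x` (the least `r > 0` such
that `x^r = x^t` for some positive `t ≠ r`) and `p` is the period of `x` (the least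
`p > 0` with `x^(r+p) = x^r`). Powers are expressed via `pow1 x (n-1) = x^n`. -/
def HasIndexPeriod {S : Type*} [Mul S] (x : S) (r p : ℕ) : Prop :=
  (0 < r ∧ (∃ t, 0 < t ∧ t ≠ r ∧ pow1 x (t - 1) = pow1 x (r - 1)) ∧
    ∀ r', 0 < r' → (∃ t, 0 < t ∧ t ≠ r' ∧ pow1 x (t - 1) = pow1 x (r' - 1)) → r ≤ r') ∧
  (0 < p ∧ pow1 x (r + p - 1) = pow1 x (r - 1) ∧
    ∀ p', 0 < p' → pow1 x (r + p' - 1) = pow1 x (r - 1) → p ≤ p')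

lemma mem_PiSet {S : Type*} [Mul S] {T : List S} {s : S} :
    s ∈ PiSet T ↔ ∃ a l, List.Subperm (a :: l) T ∧ sprod a l = s := by
  constructor
  · rintro ⟨u, hu, a, l, hp, hs⟩
    exact ⟨a, l, ⟨u, hp.symm, hu⟩, hs⟩
  · rintro ⟨a, l, ⟨u, hp, hu⟩, hs⟩
    exact ⟨u, hu, a, l, hp.symm, hs⟩

lemma PiSet_mono {S : Type*} [Mul S] {T₁ T₂ : List S} (h : T₁.Sublist T₂) :
    PiSet T₁ ⊆ PiSet T₂ := by
  intro s hs
  rw [mem_PiSet] at hs ⊢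
  obtain ⟨a, l, hsub, hp⟩ := hs
  exact ⟨a, l, hsub.trans h.subperm, hp⟩

lemma PiSet_perm {S : Type*} [Mul S] {T₁ T₂ : List S} (h : T₁.Perm T₂) :
    PiSet T₁ = PiSet T₂ := by
  ext s
  rw [mem_PiSet, mem_PiSet]
  constructor <;> rintro ⟨a, l, hsub, hp⟩
  · exact ⟨a, l, hsub.trans h.subperm, hp⟩
  · exact ⟨a, l, hsub.trans h.symm.subperm, hp⟩

lemma sprod_append_singleton {S : Type*} [Mul S] (a : S) (l : List S) (x : S) :
    sprod a (l ++ [x]) = sprod a l * x := by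
  simp [sprod, List.foldl_append]

lemma mul_mem_PiSet {S : Type*} [Mul S] {T' : List S} {s x : S}
    (hs : s ∈ PiSet T') : s * x ∈ PiSet (T' ++ [x]) := by
  rw [mem_PiSet] at hs ⊢
  obtain ⟨a, l, hsub, hp⟩ := hs
  refine ⟨a, l ++ [x], ?_, by rw [sprod_append_singleton, hp]⟩
  have : List.Subperm ((a :: l) ++ [x]) (T' ++ [x]) := (List.subperm_append_right [x]).mpr hsub
  simpa using this

lemma x_mem_PiSet {S : Type*} [Mul S] (T' : List S) (x : S) :
    x ∈ PiSet (T' ++ [x]) := by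
  rw [mem_PiSet]
  exact ⟨x, [], (List.sublist_append_right T' [x]).subperm, rfl⟩

lemma PiSet_finite {S : Type*} [Mul S] [Nonempty S] (L : List S) : (PiSet L).Finite := by
  obtain ⟨d⟩ := ‹Nonempty S›
  have h : PiSet L ⊆ (fun m : List S => match m with | [] => d | a :: l => sprod a l) ''
      {m | m ∈ (L.sublists.flatMap List.permutations)} := by
    rintro s ⟨u, hu, a, l, hp, hs⟩
    refine ⟨a :: l, ?_, hs⟩
    simp only [Set.mem_setOf_eq, List.mem_flatMap, List.mem_sublists, List.mem_permutations]
    exact ⟨u, hu, hp⟩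
  exact (((L.sublists.flatMap List.permutations).finite_toSet).image _).subset h

lemma pow1_succ {S : Type*} [Mul S] (x : S) (n : ℕ) : pow1 x (n + 1) = pow1 x n * x := rfl

lemma pow1_mul {S : Type*} [Semigroup S] (x : S) (a b : ℕ) :
    pow1 x a * pow1 x b = pow1 x (a + b + 1) := by
  induction b with
  | zero => rfl
  | succ b ih =>
      rw [pow1_succ, ← mul_assoc, ih]
      rfl


/-- If `Π(T) ∩ E(S) = ∅` and `x` is a term of `T`, then deleting one occurrence of `x`
from `T` yields `T'` with `Π(T') ⊊ Π(T)`; equivalently `λ_{T'}(x) = |Π(T'·x) \ Π(T')| ≥ 1`. -/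
theorem stmt_2 {S : Type*} [Semigroup S] [Nonempty S]
    (T T' L₁ L₂ : List S) (x : S)
    (hT : T = L₁ ++ x :: L₂) (hT' : T' = L₁ ++ L₂)
    (hfree : PiSet T ∩ {e : S | e * e = e} = ∅) :
    PiSet T' ⊂ PiSet T ∧ 1 ≤ (PiSet (T' ++ [x]) \ PiSet T').ncard := by
  -- T' ++ [x] is a permutation of T
  have hperm : (T' ++ [x]).Perm T := by
    rw [hT, hT']
    have h1 : (L₁ ++ L₂) ++ [x] = L₁ ++ (L₂ ++ [x]) := by rw [List.append_assoc]
    rw [h1]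
    exact List.Perm.append_left L₁ (List.perm_append_singleton x L₂)
  have hPeq : PiSet (T' ++ [x]) = PiSet T := PiSet_perm hperm
  have hsub : PiSet T' ⊆ PiSet T := by
    apply PiSet_mono
    rw [hT, hT']
    exact List.Sublist.append_left (List.sublist_cons_self x L₂) L₁
  have hfin : (PiSet T).Finite := PiSet_finite T
  have hne : ¬ PiSet T ⊆ PiSet T' := by
    intro hle
    -- all powers of x are in PiSet T
    have hpow : ∀ n, pow1 x n ∈ PiSet T := by
      intro n
      induction n with
      | zero =>
          rw [← hPeq]; exact x_mem_PiSet T' x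
      | succ n ih =>
          have h1 : pow1 x n ∈ PiSet T' := hle ih
          rw [pow1_succ, ← hPeq]
          exact mul_mem_PiSet h1
    -- pigeonhole
    obtain ⟨m, -, n, -, hmn, he⟩ :=
      Set.infinite_univ.exists_ne_map_eq_of_mapsTo
        (f := fun n : ℕ => pow1 x n) (fun n _ => hpow n) hfin
    -- wlog m < n
    wlog hlt : m < n generalizing m n
    · exact this n m hmn.symm he.symm (by omega)
    set p := n - m with hp
    have hp0 : 0 < p := by omega
    have hbase : pow1 x (m + p) = pow1 x m := by
      rw [show m + p = n by omega]; exact he.symm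
    have hA : ∀ j, pow1 x (m + j + p) = pow1 x (m + j) := by
      intro j
      induction j with
      | zero => simpa using hbase
      | succ j ih =>
          have : m + (j + 1) + p = (m + j + p) + 1 := by omega
          rw [this, pow1_succ, ih]
          rfl
    have hB : ∀ k j, pow1 x (m + j + k * p) = pow1 x (m + j) := by
      intro k
      induction k with
      | zero => simp
      | succ k ih =>
          intro j
          have h1 : m + j + (k + 1) * p = m + (j + k * p) + p := by ring
          rw [h1, hA (j + k * p), ← Nat.add_assoc, ih j]
    -- build idempotent
    have hmp : m + 1 ≤ (m + 1) * p := Nat.le_mul_of_pos_right _ hp0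
    set c := (m + 1) * p - 1 with hc
    have hcm : m ≤ c := by omega
    have hidem : pow1 x c * pow1 x c = pow1 x c := by
      rw [pow1_mul]
      have h1 : c + c + 1 = m + (c - m) + (m + 1) * p := by omega
      have h2 : c = m + (c - m) := by omega
      rw [h1, hB (m + 1) (c - m), ← h2]
    have : pow1 x c ∈ PiSet T ∩ {e : S | e * e = e} := ⟨hpow c, hidem⟩
    rw [hfree] at this
    exact this
  refine ⟨⟨hsub, hne⟩, ?_⟩
  obtain ⟨s, hsT, hsT'⟩ := Set.not_subset.mp hne
  have hfin' : (PiSet (T' ++ [x]) \ PiSet T').Finite := ((hPeq ▸ hfin).subset Set.diff_subset)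
  exact (Set.ncard_pos hfin').mpr ⟨s, by rw [hPeq]; exact hsT, hsT'⟩
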